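/- The dual KKT system is solvable: there exists a tuple (u, {V^{(t)}}, {y^{(t)}}, {z^{(t)}}, λ, {Λ^{(t)}}) satisfying the dual KKT system. -/

import Mathlib

open Finset
section BASE

open Finset

variable {m : ℕ}

/-- max of a vector over `Fin m`, `m > 0`. -/
noncomputable def auxMax (hm : 0 < m) (v : Fin m → ℝ) : ℝ :=
  Finset.univ.sup' (Finset.univ_nonempty_iff.mpr (Fin.pos_iff_nonempty.mp hm)) v

lemma le_auxMax (hm : 0 < m) (v : Fin m → ℝ) (i : Fin m) : v i ≤ auxMax hm v :=
  Finset.le_sup' v (mem_univ i)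

lemma auxMax_le (hm : 0 < m) (v : Fin m → ℝ) {c : ℝ} (h : ∀ i, v i ≤ c) :
    auxMax hm v ≤ c :=
  Finset.sup'_le _ _ fun i _ => h i

lemma exists_auxMax (hm : 0 < m) (v : Fin m → ℝ) : ∃ i, auxMax hm v = v i := by
  obtain ⟨i, -, h⟩ := Finset.exists_mem_eq_sup'
    (Finset.univ_nonempty_iff.mpr (Fin.pos_iff_nonempty.mp hm)) v
  exact ⟨i, h⟩

lemma auxMax_add_const (hm : 0 < m) (v : Fin m → ℝ) (c : ℝ) :
    auxMax hm (fun i => v i + c) = auxMax hm v + c := by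
  rw [auxMax, auxMax, Finset.sup'_add]

lemma auxMax_eq_ciSup (hm : 0 < m) (v : Fin m → ℝ) : auxMax hm v = ⨆ i, v i := by
  haveI : Nonempty (Fin m) := Fin.pos_iff_nonempty.mp hm
  refine le_antisymm ?_ (ciSup_le fun i => le_auxMax hm v i)
  obtain ⟨i, hi⟩ := exists_auxMax hm v
  rw [hi]
  exact le_ciSup (Set.Finite.bddAbove (Set.finite_range v)) i

/-- argmax over a nonempty subset. -/
lemma aux_argmax_on {ι : Type*} [Finite ι] (A : Set ι) (hA : A.Nonempty) (c : ι → ℝ) :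
    ∃ i0 ∈ A, ∀ i ∈ A, c i ≤ c i0 := by
  haveI : Nonempty A := hA.to_subtype
  obtain ⟨⟨i0, hi0⟩, h⟩ := Finite.exists_max (fun i : A => c i)
  exact ⟨i0, hi0, fun i hi => h ⟨i, hi⟩⟩

/-- perturbation lemma: for small `s > 0`, `b i + s * c i` is bounded by
`max b + s * c i₀` where `i₀` maximizes `c` among maximizers of `b`. -/
lemma aux_pert (hm : 0 < m) (b c : Fin m → ℝ) (i0 : Fin m)
    (hb : b i0 = auxMax hm b) (hc : ∀ i, b i = auxMax hm b → c i ≤ c i0) :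
    ∃ s0 : ℝ, 0 < s0 ∧ ∀ s : ℝ, 0 < s → s ≤ s0 → ∀ i,
      b i + s * c i ≤ auxMax hm b + s * c i0 := by
  haveI : Nonempty (Fin m) := Fin.pos_iff_nonempty.mp hm
  set Mb := auxMax hm b with hMb
  set F : Fin m → ℝ := fun i =>
    if b i = Mb then 1 else (Mb - b i) / (1 + max 0 (c i - c i0)) with hF
  have hFpos : ∀ i, 0 < F i := by
    intro i
    rw [hF]
    by_cases h : b i = Mb
    · simp [h]
    · simp only [h, if_false]
      apply div_pos
      · have := le_auxMax hm b i
        rw [← hMb] at this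
        cases this.lt_or_eq with
        | inl h' => linarith
        | inr h' => exact absurd h' h
      · have : (0:ℝ) ≤ max 0 (c i - c i0) := le_max_left _ _
        linarith
  have hne : (Finset.univ : Finset (Fin m)).Nonempty :=
    Finset.univ_nonempty_iff.mpr inferInstance
  refine ⟨Finset.univ.inf' hne F, ?_, ?_⟩
  · rw [Finset.lt_inf'_iff]
    exact fun i _ => hFpos i
  · intro s hs hss i
    have hsF : s ≤ F i := hss.trans (Finset.inf'_le F (mem_univ i))
    by_cases h : b i = Mb
    · have := hc i h
      have := mul_le_mul_of_nonneg_left this hs.le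
      linarith [h.ge, h.le]
    · rw [hF] at hsF
      simp only [h, if_false] at hsF
      set q : ℝ := c i - c i0 with hq
      have h1 : (0:ℝ) < 1 + max 0 q := by
        have : (0:ℝ) ≤ max 0 q := le_max_left _ _
        linarith
      have h2 : s * (1 + max 0 q) ≤ Mb - b i := (le_div_iff₀ h1).mp hsF
      have h3 : s * q ≤ s * max 0 q := mul_le_mul_of_nonneg_left (le_max_right _ _) hs.le
      have h4 : s * q = s * c i - s * c i0 := by rw [hq]; ring
      nlinarith

open Finset

lemma aux_repr {n k : ℕ} (f : (Fin n → Fin k → ℝ) →L[ℝ] ℝ) (w : Fin n → Fin k → ℝ) :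
    f w = ∑ t, ∑ i, w t i * f (Pi.single t (Pi.single i 1)) := by
  have hw : w = ∑ t, ∑ i,
      (w t i) • (Pi.single t (Pi.single i (1:ℝ)) : Fin n → Fin k → ℝ) := by
    funext t' i'
    simp only [Finset.sum_apply, Pi.smul_apply, smul_eq_mul, Pi.single_apply]
    rw [Finset.sum_eq_single t']
    · rw [Finset.sum_eq_single i'] <;> simp +contextual
    · intro t _ ht
      simp [Pi.single_apply, Ne.symm ht]
    · simp
  conv_lhs => rw [hw]
  rw [map_sum]
  refine Finset.sum_congr rfl fun t _ => ?_
  rw [map_sum]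
  exact Finset.sum_congr rfl fun i _ => by rw [map_smul, smul_eq_mul]

end BASE

section G

variable {N m : ℕ} {mt : Fin N → ℕ}

/-- the objective function. -/
noncomputable def auxG (hm : 0 < m) (D : ∀ t : Fin N, Matrix (Fin m) (Fin (mt t)) ℝ)
    (a : ∀ t : Fin N, Fin (mt t) → ℝ) (y : Fin N → Fin m → ℝ) : ℝ :=
  auxMax hm (fun i => ∑ t, y t i) +
    ∑ t, ∑ j, a t j * auxMax hm (fun i => -(D t i j) - y t i)

variable (hm : 0 < m) (D : ∀ t : Fin N, Matrix (Fin m) (Fin (mt t)) ℝ)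
    (a : ∀ t : Fin N, Fin (mt t) → ℝ)

lemma auxG_shift (hasum : ∀ t, ∑ j, a t j = 1) (y : Fin N → Fin m → ℝ) (γ : Fin N → ℝ) :
    auxG hm D a (fun t i => y t i + γ t) = auxG hm D a y := by
  simp only [auxG]
  have h1 : (fun i => ∑ t, (y t i + γ t)) = fun i => (∑ t, y t i) + ∑ t, γ t := by
    funext i; rw [Finset.sum_add_distrib]
  rw [h1, auxMax_add_const]
  have h3 : ∀ t, ∑ j, a t j * auxMax hm (fun i => -(D t i j) - (y t i + γ t))
      = (∑ j, a t j * auxMax hm (fun i => -(D t i j) - y t i)) - γ t := by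
    intro t
    have h2 : ∀ j, a t j * auxMax hm (fun i => -(D t i j) - (y t i + γ t))
        = a t j * auxMax hm (fun i => -(D t i j) - y t i) - a t j * γ t := by
      intro j
      have : (fun i => -(D t i j) - (y t i + γ t))
          = fun i => (-(D t i j) - y t i) + (-(γ t)) := by funext i; ring
      rw [this, auxMax_add_const]; ring
    rw [Finset.sum_congr rfl fun j _ => h2 j, Finset.sum_sub_distrib, ← Finset.sum_mul,
      hasum t, one_mul]
  rw [Finset.sum_congr rfl fun t _ => h3 t, Finset.sum_sub_distrib]
  ring

lemma auxG_lb (ha : ∀ t j, 0 ≤ a t j) (hasum : ∀ t, ∑ j, a t j = 1)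
    (y : Fin N → Fin m → ℝ) (hy : ∀ t, y t ⟨0, hm⟩ = 0) (t0 : Fin N) (i0 : Fin m) :
    |y t0 i0| / m - (∑ t, auxMax hm (fun i => ∑ j, a t j * D t i j)) ≤ auxG hm D a y := by
  haveI : Nonempty (Fin m) := Fin.pos_iff_nonempty.mp hm
  have hm' : (0:ℝ) < m := by exact_mod_cast hm
  choose k hk using fun t => Finite.exists_min (y t)
  -- second-term bound
  have h2 : ∀ t, -(y t (k t)) - auxMax hm (fun i => ∑ j, a t j * D t i j)
      ≤ ∑ j, a t j * auxMax hm (fun i => -(D t i j) - y t i) := by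
    intro t
    have e1 : ∑ j, a t j * (-(D t (k t) j) - y t (k t))
        = -(∑ j, a t j * D t (k t) j) - y t (k t) := by
      have : ∀ j, a t j * (-(D t (k t) j) - y t (k t))
          = -(a t j * D t (k t) j) - a t j * y t (k t) := fun j => by ring
      rw [Finset.sum_congr rfl fun j _ => this j, Finset.sum_sub_distrib,
        Finset.sum_neg_distrib, ← Finset.sum_mul, hasum t, one_mul]
    have e2 : ∑ j, a t j * (-(D t (k t) j) - y t (k t))
        ≤ ∑ j, a t j * auxMax hm (fun i => -(D t i j) - y t i) :=
      Finset.sum_le_sum fun j _ => mul_le_mul_of_nonneg_left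
        (le_auxMax hm (fun i => -(D t i j) - y t i) (k t)) (ha t j)
    have e3 : ∑ j, a t j * D t (k t) j ≤ auxMax hm (fun i => ∑ j, a t j * D t i j) :=
      le_auxMax hm (fun i => ∑ j, a t j * D t i j) (k t)
    rw [e1] at e2
    linarith
  -- first-term bound
  have h1 : (∑ i, ∑ t, y t i) / m ≤ auxMax hm (fun i => ∑ t, y t i) := by
    have h := Finset.sum_le_sum (fun i (_ : i ∈ Finset.univ) =>
      le_auxMax hm (fun i => ∑ t, y t i) i)
    rw [Finset.sum_const, card_univ, Fintype.card_fin, nsmul_eq_mul] at h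
    rw [div_le_iff₀ hm']
    linarith
  -- per-t nonnegativity of S
  have hS : ∀ t, 0 ≤ (∑ i, y t i) / m - y t (k t) := by
    intro t
    have h := Finset.sum_le_sum (fun i (_ : i ∈ Finset.univ) => hk t i)
    rw [Finset.sum_const, card_univ, Fintype.card_fin, nsmul_eq_mul] at h
    have h' : y t (k t) ≤ (∑ i, y t i) / m := by
      rw [le_div_iff₀ hm']; linarith
    linarith
  -- S t0 bound
  have hS0 : |y t0 i0| / m ≤ (∑ i, y t0 i) / m - y t0 (k t0) := by
    have hmn : y t0 (k t0) ≤ 0 := (hy t0) ▸ hk t0 ⟨0, hm⟩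
    have hterms : ∀ i, 0 ≤ y t0 i - y t0 (k t0) := fun i => by linarith [hk t0 i]
    have habs : |y t0 i0| ≤ ∑ i, (y t0 i - y t0 (k t0)) := by
      rcases le_or_gt 0 (y t0 i0) with h | h
      · rw [abs_of_nonneg h]
        calc y t0 i0 ≤ y t0 i0 - y t0 (k t0) := by linarith
          _ ≤ _ := Finset.single_le_sum (fun i _ => hterms i) (mem_univ i0)
      · rw [abs_of_neg h]
        calc -(y t0 i0) ≤ y t0 ⟨0, hm⟩ - y t0 (k t0) := by
              rw [hy t0]; linarith [hk t0 i0]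
          _ ≤ _ := Finset.single_le_sum (fun i _ => hterms i) (mem_univ (⟨0, hm⟩ : Fin m))
    have hsum : ∑ i, (y t0 i - y t0 (k t0)) = (∑ i, y t0 i) - m * y t0 (k t0) := by
      rw [Finset.sum_sub_distrib, Finset.sum_const, card_univ, Fintype.card_fin, nsmul_eq_mul]
    rw [hsum] at habs
    rw [div_le_iff₀ hm']
    have heq : ((∑ i, y t0 i) / m - y t0 (k t0)) * m = (∑ i, y t0 i) - m * y t0 (k t0) := by
      field_simp
    rw [heq]
    linarith
  -- combine
  have hcomm : (∑ i, ∑ t, y t i) / m = ∑ t, (∑ i, y t i) / m := by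
    rw [Finset.sum_comm, Finset.sum_div]
  have hsumS : (∑ i, y t0 i) / m - y t0 (k t0) ≤ ∑ t, ((∑ i, y t i) / m - y t (k t)) :=
    Finset.single_le_sum (fun t _ => hS t) (mem_univ t0)
  have h2s : ∑ t, (-(y t (k t)) - auxMax hm (fun i => ∑ j, a t j * D t i j))
      ≤ ∑ t, ∑ j, a t j * auxMax hm (fun i => -(D t i j) - y t i) :=
    Finset.sum_le_sum fun t _ => h2 t
  rw [Finset.sum_sub_distrib, Finset.sum_neg_distrib] at h2s
  rw [Finset.sum_sub_distrib] at hsumS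
  simp only [auxG]
  rw [hcomm] at h1
  linarith

lemma auxG_cont : Continuous (auxG hm D a) := by
  apply Continuous.add
  · exact Continuous.finset_sup'_apply _ fun i _ =>
      continuous_finset_sum _ fun t _ => (continuous_apply i).comp (continuous_apply t)
  · exact continuous_finset_sum _ fun t _ => continuous_finset_sum _ fun j _ =>
      continuous_const.mul (Continuous.finset_sup'_apply _ fun i _ =>
        continuous_const.sub ((continuous_apply i).comp (continuous_apply t)))

lemma auxG_exists_min (hN : 0 < N) (ha : ∀ t j, 0 ≤ a t j) (hasum : ∀ t, ∑ j, a t j = 1) :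
    ∃ ystar, ∀ y, auxG hm D a ystar ≤ auxG hm D a y := by
  haveI : Nonempty (Fin N) := Fin.pos_iff_nonempty.mp hN
  have hm' : (0:ℝ) < m := by exact_mod_cast hm
  set C := ∑ t, auxMax hm (fun i => ∑ j, a t j * D t i j) with hC
  set g := auxG hm D a with hg
  set R : ℝ := m * (C + g 0 + 1) with hR
  have hg0 : -C ≤ g 0 := by
    have h := auxG_lb hm D a ha hasum 0 (fun t => rfl) (Classical.arbitrary _) ⟨0, hm⟩
    simpa using h
  set W : Set (Fin N → Fin m → ℝ) := {y | ∀ t, y t ⟨0, hm⟩ = 0} with hW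
  have hWclosed : IsClosed W := by
    have : W = ⋂ t, {y : Fin N → Fin m → ℝ | y t ⟨0, hm⟩ = 0} := by
      ext y; simp [hW, Set.mem_iInter]
    rw [this]
    exact isClosed_iInter fun t =>
      isClosed_eq ((continuous_apply _).comp (continuous_apply t)) continuous_const
  set B := Set.Icc (fun _ _ => -R : Fin N → Fin m → ℝ) (fun _ _ => R) ∩ W with hB
  have hRpos : 0 ≤ R := by
    rw [hR]; nlinarith
  have hB0 : (0 : Fin N → Fin m → ℝ) ∈ B := by
    refine ⟨Set.mem_Icc.mpr ⟨?_, ?_⟩, fun t => rfl⟩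
    · rw [Pi.le_def]; intro t; rw [Pi.le_def]; intro i
      simp only [Pi.zero_apply]; linarith
    · rw [Pi.le_def]; intro t; rw [Pi.le_def]; intro i
      simp only [Pi.zero_apply]; linarith
  have hBcomp : IsCompact B := IsCompact.inter_right isCompact_Icc hWclosed
  obtain ⟨ystar, hyB, hymin⟩ := hBcomp.exists_isMinOn ⟨0, hB0⟩ (auxG_cont hm D a).continuousOn
  rw [isMinOn_iff] at hymin
  refine ⟨ystar, fun v => ?_⟩
  set vt : Fin N → Fin m → ℝ := fun t i => v t i - v t ⟨0, hm⟩ with hvt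
  have hinv : g vt = g v := by
    have : vt = fun t i => v t i + (fun t => -(v t ⟨0, hm⟩)) t := by
      funext t i; simp [hvt]; ring
    rw [hg, this, auxG_shift hm D a hasum]
  have hvW : vt ∈ W := fun t => by simp [hvt]
  by_cases hvB : vt ∈ B
  · rw [← hinv]; exact hymin vt hvB
  · have hnIcc : vt ∉ Set.Icc (fun _ _ => -R : Fin N → Fin m → ℝ) (fun _ _ => R) :=
      fun hIcc => hvB ⟨hIcc, hvW⟩
    have hbig : ∃ t i, R < |vt t i| := by
      by_contra hcon
      push_neg at hcon
      refine hnIcc (Set.mem_Icc.mpr ⟨?_, ?_⟩)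
      · rw [Pi.le_def]; intro t; rw [Pi.le_def]; intro i
        have h := hcon t i; rw [abs_le] at h; exact h.1
      · rw [Pi.le_def]; intro t; rw [Pi.le_def]; intro i
        have h := hcon t i; rw [abs_le] at h; exact h.2
    obtain ⟨t, i, hti⟩ := hbig
    have hlb := auxG_lb hm D a ha hasum vt hvW t i
    have hRm : R / m = C + g 0 + 1 := by rw [hR]; field_simp
    have h2 : C + g 0 + 1 < |vt t i| / m := by
      rw [← hRm]
      gcongr
    have h3 : g ystar ≤ g 0 := hymin 0 hB0
    rw [← hinv]
    rw [← hg, ← hC] at hlb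
    linarith
section Key

variable {N m : ℕ} {mt : Fin N → ℕ}

lemma aux_key (hN : 0 < N) (hm : 0 < m) (hmt : ∀ t, 0 < mt t)
    (D : ∀ t : Fin N, Matrix (Fin m) (Fin (mt t)) ℝ)
    (a : ∀ t : Fin N, Fin (mt t) → ℝ)
    (ha : ∀ t j, 0 ≤ a t j) (hasum : ∀ t, ∑ j, a t j = 1)
    (ys : Fin N → Fin m → ℝ) (hys : ∀ y, auxG hm D a ys ≤ auxG hm D a y) :
    ∃ (lam : Fin m → ℝ) (mu : ∀ t, Fin (mt t) → Fin m → ℝ),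
      (∀ i, 0 ≤ lam i) ∧ (∑ i, lam i = 1) ∧
      (∀ i, i ∉ {i' | (∑ t, ys t i') = auxMax hm (fun i'' => ∑ t, ys t i'')} → lam i = 0) ∧
      (∀ t j i, 0 ≤ mu t j i) ∧ (∀ t j, ∑ i, mu t j i = 1) ∧
      (∀ t (j : Fin (mt t)) i,
        i ∉ {i' | -(D t i' j) - ys t i' = auxMax hm (fun i'' => -(D t i'' j) - ys t i'')} →
          mu t j i = 0) ∧
      (∀ t i, (0:ℝ) = lam i - ∑ j, a t j * mu t j i) := by
  classical
  haveI : Nonempty (Fin m) := Fin.pos_iff_nonempty.mp hm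
  haveI : Nonempty (Fin N) := Fin.pos_iff_nonempty.mp hN
  haveI : Nonempty (Σ t : Fin N, Fin (mt t)) :=
    ⟨⟨Classical.arbitrary _, ⟨0, hmt _⟩⟩⟩
  set A0 : Set (Fin m) := {i' | (∑ t, ys t i') = auxMax hm (fun i'' => ∑ t, ys t i'')} with hA0
  set At : ∀ t : Fin N, Fin (mt t) → Set (Fin m) := fun t j =>
    {i' | -(D t i' j) - ys t i' = auxMax hm (fun i'' => -(D t i'' j) - ys t i'')} with hAt
  have hA0ne : A0.Nonempty := by
    obtain ⟨i, hi⟩ := exists_auxMax hm (fun i'' => ∑ t, ys t i''); exact ⟨i, hi.symm⟩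
  have hAtne : ∀ t j, (At t j).Nonempty := by
    intro t j
    obtain ⟨i, hi⟩ := exists_auxMax hm (fun i'' => -(D t i'' j) - ys t i''); exact ⟨i, hi.symm⟩
  by_contra h0K
  -- the convex compact set K
  set K : Set (Fin N → Fin m → ℝ) := {w | ∃ (lam : Fin m → ℝ) (mu : ∀ t, Fin (mt t) → Fin m → ℝ),
      (∀ i, 0 ≤ lam i) ∧ (∑ i, lam i = 1) ∧ (∀ i, i ∉ A0 → lam i = 0) ∧
      (∀ t j i, 0 ≤ mu t j i) ∧ (∀ t j, ∑ i, mu t j i = 1) ∧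
      (∀ t j i, i ∉ At t j → mu t j i = 0) ∧
      (∀ t i, w t i = lam i - ∑ j, a t j * mu t j i)} with hK
  have h0K' : (0 : Fin N → Fin m → ℝ) ∉ K := by
    rintro ⟨lam, mu, h1, h2, h3, h4, h5, h6, h7⟩
    exact h0K ⟨lam, mu, h1, h2, h3, h4, h5, h6, fun t i => by
      have := h7 t i; simpa using this⟩
  have hKconv : Convex ℝ K := by
    rintro w1 ⟨l1, mu1, hl1a, hl1b, hl1c, hm1a, hm1b, hm1c, hw1⟩
      w2 ⟨l2, mu2, hl2a, hl2b, hl2c, hm2a, hm2b, hm2c, hw2⟩ p q hp hq hpq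
    refine ⟨fun i => p * l1 i + q * l2 i, fun t j i => p * mu1 t j i + q * mu2 t j i,
      fun i => add_nonneg (mul_nonneg hp (hl1a i)) (mul_nonneg hq (hl2a i)), ?_, ?_,
      fun t j i => add_nonneg (mul_nonneg hp (hm1a t j i)) (mul_nonneg hq (hm2a t j i)),
      ?_, ?_, ?_⟩
    · simp only []
      rw [Finset.sum_add_distrib, ← Finset.mul_sum, ← Finset.mul_sum, hl1b, hl2b]; linarith
    · intro i hi
      show p * l1 i + q * l2 i = 0
      rw [hl1c i hi, hl2c i hi]; ring
    · intro t j
      show ∑ i, (p * mu1 t j i + q * mu2 t j i) = 1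
      rw [Finset.sum_add_distrib, ← Finset.mul_sum, ← Finset.mul_sum, hm1b t j, hm2b t j]
      linarith
    · intro t j i hi
      show p * mu1 t j i + q * mu2 t j i = 0
      rw [hm1c t j i hi, hm2c t j i hi]; ring
    · intro t i
      show (p • w1 + q • w2) t i = (p * l1 i + q * l2 i) - ∑ j, a t j * (p * mu1 t j i + q * mu2 t j i)
      have hsm : (p • w1 + q • w2) t i = p * w1 t i + q * w2 t i := by
        simp [smul_eq_mul]
      rw [hsm, hw1 t i, hw2 t i]
      have hsum : ∑ j, a t j * (p * mu1 t j i + q * mu2 t j i)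
          = p * ∑ j, a t j * mu1 t j i + q * ∑ j, a t j * mu2 t j i := by
        rw [Finset.mul_sum, Finset.mul_sum, ← Finset.sum_add_distrib]
        exact Finset.sum_congr rfl fun j _ => by ring
      rw [hsum]; ring
  have hKcomp : IsCompact K := by
    set F : (Fin m → ℝ) × (∀ t, Fin (mt t) → Fin m → ℝ) → (Fin N → Fin m → ℝ) :=
      fun p => fun t i => p.1 i - ∑ j, a t j * p.2 t j i with hF
    have hFcont : Continuous F := by
      apply continuous_pi; intro t; apply continuous_pi; intro i
      apply Continuous.sub
      · exact (continuous_apply i).comp continuous_fst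
      · refine continuous_finset_sum _ fun j _ => continuous_const.mul ?_
        have : (fun p : (Fin m → ℝ) × (∀ t, Fin (mt t) → Fin m → ℝ) => p.2 t j i)
            = (fun v : Fin m → ℝ => v i) ∘ (fun v : ∀ t, Fin (mt t) → Fin m → ℝ => v t j)
              ∘ Prod.snd := rfl
        rw [this]
        exact (continuous_apply i).comp (((continuous_apply j).comp
          (continuous_apply t)).comp continuous_snd)
    set P1 : Set (Fin m → ℝ) :=
      {l | (∀ i, 0 ≤ l i) ∧ (∑ i, l i = 1) ∧ (∀ i, i ∉ A0 → l i = 0)} with hP1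
    set P2 : Set (∀ t, Fin (mt t) → Fin m → ℝ) :=
      {μ | (∀ t j i, 0 ≤ μ t j i) ∧ (∀ t j, ∑ i, μ t j i = 1) ∧
        (∀ t j i, i ∉ At t j → μ t j i = 0)} with hP2
    have hKim : K = F '' (P1 ×ˢ P2) := by
      ext w
      constructor
      · rintro ⟨lam, mu, h1, h2, h3, h4, h5, h6, h7⟩
        exact ⟨(lam, mu), ⟨⟨h1, h2, h3⟩, ⟨h4, h5, h6⟩⟩, by funext t i; exact (h7 t i).symm⟩
      · rintro ⟨⟨lam, mu⟩, ⟨⟨h1, h2, h3⟩, ⟨h4, h5, h6⟩⟩, rfl⟩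
        exact ⟨lam, mu, h1, h2, h3, h4, h5, h6, fun t i => rfl⟩
    rw [hKim]
    refine (IsCompact.prod ?_ ?_).image hFcont
    · refine IsCompact.of_isClosed_subset (isCompact_Icc (a := (0 : Fin m → ℝ)) (b := 1))
        ?_ ?_
      · have e : P1 = (⋂ i, {l : Fin m → ℝ | 0 ≤ l i}) ∩ {l | ∑ i, l i = 1} ∩
            (⋂ i, {l : Fin m → ℝ | i ∉ A0 → l i = 0}) := by
          ext l
          simp only [hP1, Set.mem_setOf_eq, Set.mem_inter_iff, Set.mem_iInter]
          tauto
        rw [e]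
        refine IsClosed.inter (IsClosed.inter ?_ ?_) ?_
        · exact isClosed_iInter fun i => isClosed_le continuous_const (continuous_apply i)
        · exact isClosed_eq (continuous_finset_sum _ fun i _ => continuous_apply i)
            continuous_const
        · refine isClosed_iInter fun i => ?_
          by_cases hi : i ∈ A0
          · convert isClosed_univ
            ext l; simp [hi]
          · have e2 : {l : Fin m → ℝ | i ∉ A0 → l i = 0} = {l | l i = 0} := by
              ext l; simp [hi]
            rw [e2]
            exact isClosed_eq (continuous_apply i) continuous_const
      · intro l hl
        rw [Set.mem_Icc]
        constructor
        · rw [Pi.le_def]; intro i; exact hl.1 i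
        · rw [Pi.le_def]; intro i
          have : l i ≤ ∑ i', l i' :=
            Finset.single_le_sum (fun i' _ => hl.1 i') (Finset.mem_univ i)
          rw [hl.2.1] at this
          simpa using this
    · refine IsCompact.of_isClosed_subset
        (isCompact_Icc (a := (0 : ∀ t, Fin (mt t) → Fin m → ℝ)) (b := 1)) ?_ ?_
      · have e : P2 = (⋂ t, ⋂ j, ⋂ i, {μ : ∀ t, Fin (mt t) → Fin m → ℝ | 0 ≤ μ t j i}) ∩
            (⋂ t, ⋂ j, {μ : ∀ t, Fin (mt t) → Fin m → ℝ | ∑ i, μ t j i = 1}) ∩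
            (⋂ t, ⋂ j, ⋂ i, {μ : ∀ t, Fin (mt t) → Fin m → ℝ | i ∉ At t j → μ t j i = 0}) := by
          ext μ
          simp only [hP2, Set.mem_setOf_eq, Set.mem_inter_iff, Set.mem_iInter]
          tauto
        rw [e]
        have hev : ∀ (t : Fin N) (j : Fin (mt t)) (i : Fin m),
            Continuous (fun μ : ∀ t, Fin (mt t) → Fin m → ℝ => μ t j i) := fun t j i =>
          (continuous_apply i).comp ((continuous_apply j).comp (continuous_apply t))
        refine IsClosed.inter (IsClosed.inter ?_ ?_) ?_
        · exact isClosed_iInter fun t => isClosed_iInter fun j => isClosed_iInter fun i =>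
            isClosed_le continuous_const (hev t j i)
        · exact isClosed_iInter fun t => isClosed_iInter fun j =>
            isClosed_eq (continuous_finset_sum _ fun i _ => hev t j i) continuous_const
        · refine isClosed_iInter fun t => isClosed_iInter fun j => isClosed_iInter fun i => ?_
          by_cases hi : i ∈ At t j
          · convert isClosed_univ
            ext μ; simp [hi]
          · have e2 : {μ : ∀ t, Fin (mt t) → Fin m → ℝ | i ∉ At t j → μ t j i = 0}
                = {μ | μ t j i = 0} := by
              ext μ; simp [hi]
            rw [e2]
            exact isClosed_eq (hev t j i) continuous_const
      · intro μ hμ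
        rw [Set.mem_Icc]
        constructor
        · rw [Pi.le_def]; intro t; rw [Pi.le_def]; intro j; rw [Pi.le_def]; intro i
          exact hμ.1 t j i
        · rw [Pi.le_def]; intro t; rw [Pi.le_def]; intro j; rw [Pi.le_def]; intro i
          have : μ t j i ≤ ∑ i', μ t j i' :=
            Finset.single_le_sum (fun i' _ => hμ.1 t j i') (Finset.mem_univ i)
          rw [hμ.2.1 t j] at this
          simpa using this
  -- separation
  obtain ⟨f, c0, hfK, hc0⟩ := geometric_hahn_banach_closed_point hKconv hKcomp.isClosed h0K'
  have hc0neg : c0 < 0 := by simpa using hc0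
  set d : Fin N → Fin m → ℝ := fun t i => f (Pi.single t (Pi.single i 1)) with hd
  obtain ⟨idag, hidagA, hidagmax⟩ := aux_argmax_on A0 hA0ne (fun i => ∑ t, d t i)
  have hrho := fun (p : Σ t : Fin N, Fin (mt t)) =>
    aux_argmax_on (At p.1 p.2) (hAtne p.1 p.2) (fun i => -(d p.1 i))
  choose rho hrhoA hrhomax using hrho
  -- the witness element of K
  set lam0 : Fin m → ℝ := Pi.single idag 1 with hlam0
  set mu0 : ∀ t, Fin (mt t) → Fin m → ℝ := fun t j => Pi.single (rho ⟨t, j⟩) 1 with hmu0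
  set w : Fin N → Fin m → ℝ := fun t i => lam0 i - ∑ j, a t j * mu0 t j i with hw
  have hsingle_nonneg : ∀ (i0 i : Fin m), (0:ℝ) ≤ (Pi.single i0 (1:ℝ) : Fin m → ℝ) i := by
    intro i0 i
    rcases eq_or_ne i i0 with h | h
    · subst h; rw [Pi.single_eq_same]; norm_num
    · rw [Pi.single_eq_of_ne h]
  have hsingle_sum : ∀ i0 : Fin m, ∑ i, (Pi.single i0 (1:ℝ) : Fin m → ℝ) i = 1 := by
    intro i0
    rw [Finset.sum_eq_single i0]
    · simp
    · intro i _ hi; simp [Pi.single_eq_of_ne hi]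
    · simp
  have hwK : w ∈ K := by
    refine ⟨lam0, mu0, fun i => hsingle_nonneg idag i, hsingle_sum idag, ?_,
      fun t j i => hsingle_nonneg (rho ⟨t, j⟩) i, fun t j => hsingle_sum (rho ⟨t, j⟩), ?_,
      fun t i => rfl⟩
    · intro i hi
      have : i ≠ idag := fun h => hi (h ▸ hidagA)
      simp [hlam0, Pi.single_eq_of_ne this]
    · intro t j i hi
      have : i ≠ rho ⟨t, j⟩ := fun h => hi (h ▸ hrhoA ⟨t, j⟩)
      simp [hmu0, Pi.single_eq_of_ne this]
  have hfwlt : f w < c0 := hfK w hwK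
  -- compute f w
  have hfw_eq : f w = (∑ t, d t idag) - ∑ t, ∑ j, a t j * d t (rho ⟨t, j⟩) := by
    rw [aux_repr f w]
    have hterm : ∀ t, ∑ i, w t i * d t i = d t idag - ∑ j, a t j * d t (rho ⟨t, j⟩) := by
      intro t
      have e1 : ∑ i, lam0 i * d t i = d t idag := by
        rw [Finset.sum_eq_single idag]
        · simp [hlam0]
        · intro i _ hi; simp [hlam0, Pi.single_eq_of_ne hi]
        · simp
      have e2 : ∑ i, (∑ j, a t j * mu0 t j i) * d t i = ∑ j, a t j * d t (rho ⟨t, j⟩) := by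
        have : ∀ i, (∑ j, a t j * mu0 t j i) * d t i = ∑ j, a t j * mu0 t j i * d t i :=
          fun i => Finset.sum_mul _ _ _
        rw [Finset.sum_congr rfl fun i _ => this i, Finset.sum_comm]
        refine Finset.sum_congr rfl fun j _ => ?_
        rw [Finset.sum_eq_single (rho ⟨t, j⟩)]
        · simp [hmu0]
        · intro i _ hi; simp [hmu0, Pi.single_eq_of_ne hi]
        · simp
      have e3 : ∀ i, w t i * d t i
          = lam0 i * d t i - (∑ j, a t j * mu0 t j i) * d t i := fun i => by
        rw [hw]; ring
      rw [Finset.sum_congr rfl fun i _ => e3 i, Finset.sum_sub_distrib, e1, e2]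
    rw [Finset.sum_congr rfl fun t _ => hterm t, Finset.sum_sub_distrib]
  -- perturbation bounds
  obtain ⟨s0, hs0pos, hs0⟩ := aux_pert hm (fun i => ∑ t, ys t i) (fun i => ∑ t, d t i)
    idag hidagA (fun i hi => hidagmax i hi)
  choose s1 hs1pos hs1 using fun (p : Σ t : Fin N, Fin (mt t)) =>
    aux_pert hm (fun i => -(D p.1 i p.2) - ys p.1 i) (fun i => -(d p.1 i)) (rho p)
      (hrhoA p) (fun i hi => hrhomax p i hi)
  set s : ℝ := min s0 (Finset.univ.inf' Finset.univ_nonempty s1) with hs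
  have hspos : 0 < s := by
    rw [hs]
    apply lt_min hs0pos
    rw [Finset.lt_inf'_iff]
    exact fun p _ => hs1pos p
  have hss0 : s ≤ s0 := min_le_left _ _
  have hss1 : ∀ p, s ≤ s1 p := fun p =>
    le_trans (min_le_right _ _) (Finset.inf'_le _ (Finset.mem_univ p))
  -- the decrease bound
  have hgle : auxG hm D a (fun t i => ys t i + s * d t i) ≤ auxG hm D a ys + s * f w := by
    simp only [auxG]
    have hterm1 : auxMax hm (fun i => ∑ t, (ys t i + s * d t i))
        ≤ auxMax hm (fun i => ∑ t, ys t i) + s * (∑ t, d t idag) := by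
      apply auxMax_le
      intro i
      have h := hs0 s hspos hss0 i
      have e : ∑ t, (ys t i + s * d t i) = (∑ t, ys t i) + s * (∑ t, d t i) := by
        rw [Finset.sum_add_distrib, Finset.mul_sum]
      rw [e]
      exact h
    have hterm2 : ∀ t (j : Fin (mt t)),
        auxMax hm (fun i => -(D t i j) - (ys t i + s * d t i))
        ≤ auxMax hm (fun i => -(D t i j) - ys t i) + s * (-(d t (rho ⟨t, j⟩))) := by
      intro t j
      apply auxMax_le
      intro i
      have h := hs1 ⟨t, j⟩ s hspos (hss1 ⟨t, j⟩) i
      have e : -(D t i j) - (ys t i + s * d t i) = (-(D t i j) - ys t i) + s * (-(d t i)) := by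
        ring
      rw [e]
      exact h
    have hterm2' : ∑ t, ∑ j, a t j * auxMax hm (fun i => -(D t i j) - (ys t i + s * d t i))
        ≤ ∑ t, ∑ j, (a t j * auxMax hm (fun i => -(D t i j) - ys t i)
            - s * (a t j * d t (rho ⟨t, j⟩))) := by
      refine Finset.sum_le_sum fun t _ => Finset.sum_le_sum fun j _ => ?_
      have := mul_le_mul_of_nonneg_left (hterm2 t j) (ha t j)
      nlinarith [this]
    have e4 : ∑ t, ∑ j, (a t j * auxMax hm (fun i => -(D t i j) - ys t i)
        - s * (a t j * d t (rho ⟨t, j⟩)))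
        = (∑ t, ∑ j, a t j * auxMax hm (fun i => -(D t i j) - ys t i))
          - s * (∑ t, ∑ j, a t j * d t (rho ⟨t, j⟩)) := by
      rw [Finset.mul_sum, ← Finset.sum_sub_distrib]
      refine Finset.sum_congr rfl fun t _ => ?_
      rw [Finset.mul_sum, ← Finset.sum_sub_distrib]
    rw [e4] at hterm2'
    rw [hfw_eq]
    have := hterm1
    linarith
  have hmin := hys (fun t i => ys t i + s * d t i)
  have hsfw : s * f w < 0 := mul_neg_of_pos_of_neg hspos (lt_trans hfwlt hc0neg)
  linarith

end Key

/-- The unit simplex `Δ_m` in `ℝ^m`. -/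
def simplexSet (m : ℕ) : Set (Fin m → ℝ) :=
  {w | (∀ i, 0 ≤ w i) ∧ ∑ i, w i = 1}

/-- The dual KKT system. -/
def DualKKT (N m : ℕ) (mt : Fin N → ℕ)
    (D : ∀ t : Fin N, Matrix (Fin m) (Fin (mt t)) ℝ)
    (a : ∀ t : Fin N, Fin (mt t) → ℝ)
    (u : Fin m → ℝ) (V : ∀ t : Fin N, Matrix (Fin m) (Fin (mt t)) ℝ)
    (y : Fin N → Fin m → ℝ) (z : ∀ t : Fin N, Fin (mt t) → ℝ)
    (lam : Fin m → ℝ) (Lam : ∀ t : Fin N, Matrix (Fin m) (Fin (mt t)) ℝ) : Prop :=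
  (lam ∈ simplexSet m ∧ ∑ i, u i * lam i = ⨆ i, u i) ∧
  (∀ t : Fin N, (∀ i j, 0 ≤ V t i j) ∧ (∀ i j, 0 ≤ Lam t i j) ∧
    ∑ i, ∑ j, Lam t i j * V t i j = 0) ∧
  (∀ t : Fin N, (∀ i, ∑ j, Lam t i j = lam i) ∧ (∀ j, ∑ i, Lam t i j = a t j)) ∧
  (∀ i, ∑ t, y t i = u i) ∧
  (∀ t : Fin N, ∀ i j, V t i j = D t i j + y t i + z t j)

/-- the dual KKT system is solvable. -/
theorem stmt_4 (N m : ℕ) (hN : 0 < N) (hm : 0 < m)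
    (mt : Fin N → ℕ) (hmt : ∀ t, 0 < mt t)
    (D : ∀ t : Fin N, Matrix (Fin m) (Fin (mt t)) ℝ)
    (a : ∀ t : Fin N, Fin (mt t) → ℝ)
    (ha : ∀ t j, 0 ≤ a t j) (hasum : ∀ t, ∑ j, a t j = 1) :
    ∃ (u : Fin m → ℝ) (V : ∀ t : Fin N, Matrix (Fin m) (Fin (mt t)) ℝ)
      (y : Fin N → Fin m → ℝ) (z : ∀ t : Fin N, Fin (mt t) → ℝ)
      (lam : Fin m → ℝ) (Lam : ∀ t : Fin N, Matrix (Fin m) (Fin (mt t)) ℝ),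
      DualKKT N m mt D a u V y z lam Lam := by
  classical
  haveI : Nonempty (Fin m) := Fin.pos_iff_nonempty.mp hm
  haveI : Nonempty (Fin N) := Fin.pos_iff_nonempty.mp hN
  obtain ⟨ys, hys⟩ := auxG_exists_min hm D a hN ha hasum
  obtain ⟨lam, mu, hl0, hl1, hlsupp, hmu0, hmu1, hmusupp, heq0⟩ :=
    aux_key hN hm hmt D a ha hasum ys hys
  have hrow : ∀ t i, ∑ j, a t j * mu t j i = lam i := by
    intro t i; have := heq0 t i; linarith
  refine ⟨fun i => ∑ t, ys t i,
    fun t => Matrix.of fun i j =>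
      D t i j + ys t i + auxMax hm (fun i' => -(D t i' j) - ys t i'),
    ys,
    fun t j => auxMax hm (fun i' => -(D t i' j) - ys t i'),
    lam,
    fun t => Matrix.of fun i j => a t j * mu t j i,
    ⟨⟨hl0, hl1⟩, ?_⟩, ?_, ?_, fun i => rfl, fun t i j => rfl⟩
  · -- ∑ u lam = ⨆ u
    rw [← auxMax_eq_ciSup hm (fun i => ∑ t, ys t i)]
    have hcongr : ∀ i : Fin m, (∑ t, ys t i) * lam i
        = auxMax hm (fun i' => ∑ t, ys t i') * lam i := by
      intro i
      by_cases hiz : lam i = 0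
      · rw [hiz]; ring
      · have hiA : (∑ t, ys t i) = auxMax hm (fun i' => ∑ t, ys t i') := by
          by_contra hc
          exact hiz (hlsupp i hc)
        rw [hiA]
    rw [Finset.sum_congr rfl fun i _ => hcongr i, ← Finset.mul_sum, hl1, mul_one]
  · -- per t: V ≥ 0, Lam ≥ 0, complementarity
    intro t
    refine ⟨?_, ?_, ?_⟩
    · intro i j
      simp only [Matrix.of_apply]
      have h := le_auxMax hm (fun i' => -(D t i' j) - ys t i') i
      linarith
    · intro i j
      simp only [Matrix.of_apply]
      exact mul_nonneg (ha t j) (hmu0 t j i)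
    · refine Finset.sum_eq_zero fun i _ => Finset.sum_eq_zero fun j _ => ?_
      simp only [Matrix.of_apply]
      by_cases hmz : mu t j i = 0
      · rw [hmz]; ring
      · have hiA : -(D t i j) - ys t i = auxMax hm (fun i' => -(D t i' j) - ys t i') := by
          by_contra hc
          exact hmz (hmusupp t j i hc)
        rw [← hiA]
        ring
  · -- marginals
    intro t
    constructor
    · intro i
      simp only [Matrix.of_apply]
      exact hrow t i
    · intro j
      simp only [Matrix.of_apply]
      rw [← Finset.mul_sum, hmu1 t j, mul_one]
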